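/- Let X be a lush Banach space (real or complex). Then for every x, y ∈ S_X and every ε > 0 there is y* ∈ S_{X*} such that y ∈ S(S_X, Re y*, ε) and x belongs to the closed convex hull of 𝕋·S(S_X, Re y*, ε). -/

import Mathlib

open Set Metric Topology

/-- The Lipschitz seminorm `‖f‖ = sup { ‖f x₁ - f x₂‖ / ‖x₁ - x₂‖ : x₁ ≠ x₂ }`. -/
noncomputable def lipSemi {X Y : Type*} [NormedAddCommGroup X] [NormedAddCommGroup Y]
    (f : X → Y) : ℝ :=
  sSup {r : ℝ | ∃ x₁ x₂ : X, x₁ ≠ x₂ ∧ r = ‖f x₁ - f x₂‖ / ‖x₁ - x₂‖}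

/-- The Lip-slice `S(S_X, f, ε)` of the unit sphere generated by a Lipschitz
functional `f : X → ℝ` and `ε > 0`. -/
def lipSlice {X : Type*} [NormedAddCommGroup X] [NormedSpace ℝ X]
    (f : X → ℝ) (ε : ℝ) : Set X :=
  {z | ∃ x₁ x₂ : X, x₁ ≠ x₂ ∧ z = ‖x₁ - x₂‖⁻¹ • (x₁ - x₂) ∧
    lipSemi f - ε < (f x₁ - f x₂) / ‖x₁ - x₂‖}

/-- `S` is a Lip-slice of the unit sphere of `X`. -/
def IsLipSlice {X : Type*} [NormedAddCommGroup X] [NormedSpace ℝ X] (S : Set X) : Prop :=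
  ∃ (f : X → ℝ) (ε : ℝ), (∃ C, LipschitzWith C f) ∧ (∃ x y : X, f x ≠ f y) ∧ 0 < ε ∧
    S = lipSlice f ε

/-- A rank-one bounded linear operator: `T = g(·) • u`. -/
def RankOne (𝕜 : Type*) [RCLike 𝕜] {X : Type*} [NormedAddCommGroup X] [NormedSpace 𝕜 X]
    (T : X →L[𝕜] X) : Prop :=
  ∃ (g : X →L[𝕜] 𝕜) (u : X), ∀ x, T x = g x • u

/-- The Daugavet property: every rank-one operator satisfies `‖Id + T‖ = 1 + ‖T‖`. -/
def DaugavetProperty (𝕜 : Type*) [RCLike 𝕜] (X : Type*) [NormedAddCommGroup X]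
    [NormedSpace 𝕜 X] : Prop :=
  ∀ T : X →L[𝕜] X, RankOne 𝕜 T → ‖ContinuousLinearMap.id 𝕜 X + T‖ = 1 + ‖T‖

/-- The alternative Daugavet property: every rank-one operator satisfies
`max_{θ ∈ 𝕋} ‖Id + θT‖ = 1 + ‖T‖`. -/
def AltDaugavetProperty (𝕜 : Type*) [RCLike 𝕜] (X : Type*) [NormedAddCommGroup X]
    [NormedSpace 𝕜 X] : Prop :=
  ∀ T : X →L[𝕜] X, RankOne 𝕜 T →
    IsGreatest {r : ℝ | ∃ θ : 𝕜, ‖θ‖ = 1 ∧ r = ‖ContinuousLinearMap.id 𝕜 X + θ • T‖}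
      (1 + ‖T‖)

/-- `S` is a slice of the set `A`: a nonempty set of the form `{x ∈ A | Re f x > α}`
with `f` a nonzero continuous linear functional. -/
def IsSlice (𝕜 : Type*) [RCLike 𝕜] {X : Type*} [NormedAddCommGroup X] [NormedSpace 𝕜 X]
    (A S : Set X) : Prop :=
  S.Nonempty ∧ ∃ (f : X →L[𝕜] 𝕜) (α : ℝ), f ≠ 0 ∧ S = {x ∈ A | α < RCLike.re (f x)}

/-- Slicely countably determined set. -/
def IsSCD (𝕜 : Type*) [RCLike 𝕜] {X : Type*} [NormedAddCommGroup X] [NormedSpace 𝕜 X]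
    [NormedSpace ℝ X] (A : Set X) : Prop :=
  ∃ S : ℕ → Set X, (∀ n, IsSlice 𝕜 A (S n)) ∧
    ∀ B ⊆ A, (∀ n, (B ∩ S n).Nonempty) → A ⊆ closure (convexHull ℝ B)

/-- The slope set of a map `T : X → X`. -/
def lipSlope {X : Type*} [NormedAddCommGroup X] [NormedSpace ℝ X] (T : X → X) : Set X :=
  {z | ∃ x₁ x₂ : X, x₁ ≠ x₂ ∧ z = ‖x₁ - x₂‖⁻¹ • (T x₁ - T x₂)}

/-- `K(X*)`: the intersection of the dual unit sphere with the weak*-closure of the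
set of extreme points of the dual unit ball, as a subset of the weak* dual. -/
noncomputable def Kdual (𝕜 : Type*) [RCLike 𝕜] (X : Type*) [NormedAddCommGroup X]
    [NormedSpace 𝕜 X] : Set (WeakDual 𝕜 X) :=
  {φ | ‖WeakDual.toStrongDual φ‖ = 1} ∩
    closure (WeakDual.toStrongDual ⁻¹'
      Set.extremePoints ℝ (closedBall (0 : StrongDual 𝕜 X) 1))

/-- `D(S, ε) = {x* ∈ K(X*) : ∃ y ∈ S, Re x*(y) > 1 - ε}`. -/
def Dset (𝕜 : Type*) [RCLike 𝕜] {X : Type*} [NormedAddCommGroup X] [NormedSpace 𝕜 X]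
    (S : Set X) (ε : ℝ) : Set ↥(Kdual 𝕜 X) :=
  {φ | ∃ y ∈ S, 1 - ε < RCLike.re ((φ : WeakDual 𝕜 X) y)}

/-- `D̃(S, ε) = {x* ∈ K(X*) : ∃ y ∈ S, |x*(y)| > 1 - ε}`. -/
def DsetAbs (𝕜 : Type*) [RCLike 𝕜] {X : Type*} [NormedAddCommGroup X] [NormedSpace 𝕜 X]
    (S : Set X) (ε : ℝ) : Set ↥(Kdual 𝕜 X) :=
  {φ | ∃ y ∈ S, 1 - ε < ‖(φ : WeakDual 𝕜 X) y‖}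

/-- A set is dentable if it admits slices of arbitrarily small diameter. -/
def Dentable (𝕜 : Type*) [RCLike 𝕜] {X : Type*} [NormedAddCommGroup X] [NormedSpace 𝕜 X]
    (B : Set X) : Prop :=
  ∀ ε : ℝ, 0 < ε → ∃ S : Set X, IsSlice 𝕜 B S ∧ diam S < ε

/-- A sequence equivalent to the unit vector basis of `ℓ₁`. -/
def IsL1Seq (𝕜 : Type*) [RCLike 𝕜] {X : Type*} [NormedAddCommGroup X] [NormedSpace 𝕜 X]
    (x : ℕ → X) : Prop :=
  ∃ C : ℝ, 1 ≤ C ∧ ∀ (n : ℕ) (a : ℕ → 𝕜),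
    C⁻¹ * (∑ k ∈ Finset.range n, ‖a k‖) ≤ ‖∑ k ∈ Finset.range n, a k • x k‖ ∧
    ‖∑ k ∈ Finset.range n, a k • x k‖ ≤ C * (∑ k ∈ Finset.range n, ‖a k‖)

/-- Numerical radius of a bounded linear operator. -/
noncomputable def numRadius (𝕜 : Type*) [RCLike 𝕜] {X : Type*} [NormedAddCommGroup X]
    [NormedSpace 𝕜 X] (T : X →L[𝕜] X) : ℝ :=
  sSup {r : ℝ | ∃ (x : X) (f : X →L[𝕜] 𝕜), ‖x‖ = 1 ∧ ‖f‖ = 1 ∧ f x = 1 ∧ r = ‖f (T x)‖}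

/-- Numerical index of a Banach space. -/
noncomputable def numIndex (𝕜 : Type*) [RCLike 𝕜] (X : Type*) [NormedAddCommGroup X]
    [NormedSpace 𝕜 X] : ℝ :=
  sInf {r : ℝ | ∃ T : X →L[𝕜] X, ‖T‖ = 1 ∧ r = numRadius 𝕜 T}

/-- Numerical radius of a Lipschitz map. -/
noncomputable def lipNumRadius (𝕜 : Type*) [RCLike 𝕜] {X : Type*} [NormedAddCommGroup X]
    [NormedSpace 𝕜 X] (T : X → X) : ℝ :=
  sSup {r : ℝ | ∃ (x y : X) (f : X →L[𝕜] 𝕜), x ≠ y ∧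
    RCLike.re (f (x - y)) = ‖f‖ * ‖x - y‖ ∧ ‖f‖ * ‖x - y‖ = ‖x - y‖ ^ 2 ∧
    r = ‖f (T x - T y)‖ / ‖x - y‖ ^ 2}

/-- The Lipschitz numerical index of a Banach space. -/
noncomputable def lipNumIndex (𝕜 : Type*) [RCLike 𝕜] (X : Type*) [NormedAddCommGroup X]
    [NormedSpace 𝕜 X] : ℝ :=
  sInf {r : ℝ | ∃ T : X → X, (∃ C, LipschitzWith C T) ∧ lipSemi T = 1 ∧
    r = lipNumRadius 𝕜 T}

/-- The slice `S(S_X, Re f, ε)` of the unit sphere given by a linear functional. -/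
def sphereSlice (𝕜 : Type*) [RCLike 𝕜] {X : Type*} [NormedAddCommGroup X]
    [NormedSpace 𝕜 X] (f : X →L[𝕜] 𝕜) (ε : ℝ) : Set X :=
  {z | ‖z‖ = 1 ∧ 1 - ε < RCLike.re (f z)}

/-- `𝕋 • S`, the set of rotations of elements of `S` by unimodular scalars. -/
def circleSmul (𝕜 : Type*) [RCLike 𝕜] {X : Type*} [NormedAddCommGroup X]
    [NormedSpace 𝕜 X] (S : Set X) : Set X :=
  {w | ∃ (θ : 𝕜) (z : X), ‖θ‖ = 1 ∧ z ∈ S ∧ w = θ • z}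

/-- Lushness of a Banach space. -/
def Lush (𝕜 : Type*) [RCLike 𝕜] (X : Type*) [NormedAddCommGroup X] [NormedSpace 𝕜 X]
    [NormedSpace ℝ X] : Prop :=
  ∀ x y : X, ‖x‖ = 1 → ‖y‖ = 1 → ∀ ε : ℝ, 0 < ε → ∃ f : X →L[𝕜] 𝕜, ‖f‖ = 1 ∧
    y ∈ sphereSlice 𝕜 f ε ∧
    infDist x (convexHull ℝ (circleSmul 𝕜 (sphereSlice 𝕜 f ε))) < ε

set_option linter.unusedSectionVars false

section LushAux

open Finset RCLike

variable {𝕜 X : Type*} [RCLike 𝕜] [NormedAddCommGroup X] [NormedSpace 𝕜 X]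
  [NormedSpace ℝ X] [IsScalarTower ℝ 𝕜 X]

private theorem re_apply_le_one {g : X →L[𝕜] 𝕜} (hg : ‖g‖ ≤ 1) {z : X} (hz : ‖z‖ ≤ 1) :
    RCLike.re (g z) ≤ 1 := by
  have h1 : RCLike.re (g z) ≤ ‖g z‖ := (le_abs_self _).trans (RCLike.abs_re_le_norm _)
  have h2 : ‖g z‖ ≤ ‖g‖ * ‖z‖ := g.le_opNorm z
  nlinarith [norm_nonneg (g z), norm_nonneg g, norm_nonneg z]

/-- Auxiliary data: one block produced by an application of lushness. -/
private structure LushBlk (𝕜 X : Type*) [RCLike 𝕜] [NormedAddCommGroup X]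
    [NormedSpace 𝕜 X] where
  f : X →L[𝕜] 𝕜
  n : ℕ
  μ : ℕ → ℝ
  θ : ℕ → 𝕜
  w : ℕ → X

/-- The unrotated average of the block. -/
private noncomputable def LushBlk.blk (d : LushBlk 𝕜 X) : X :=
  ∑ j ∈ Finset.range d.n, d.μ j • d.w j

/-- The convex combination approximating `x`. -/
private noncomputable def LushBlk.v (d : LushBlk 𝕜 X) : X :=
  ∑ j ∈ Finset.range d.n, d.μ j • (d.θ j • d.w j)

/-- Specification of a block obtained from lushness applied to the pair
`(x, σp/‖σp‖)` with parameter `δ`. -/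
private structure LushBlkSpec (x σp : X) (δ : ℝ) (d : LushBlk 𝕜 X) : Prop where
  hf : ‖d.f‖ = 1
  halign : (1 - δ) * ‖σp‖ ≤ RCLike.re (d.f σp)
  hμ0 : ∀ j ∈ Finset.range d.n, 0 ≤ d.μ j
  hμ1 : ∑ j ∈ Finset.range d.n, d.μ j = 1
  hθ : ∀ j ∈ Finset.range d.n, ‖d.θ j‖ = 1
  hw : ∀ j ∈ Finset.range d.n, ‖d.w j‖ = 1
  hslice : ∀ j ∈ Finset.range d.n, 1 - δ < RCLike.re (d.f (d.w j))
  hxv : ‖x - d.v‖ < δ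

private theorem lush_step_exists (h : Lush 𝕜 X) {x : X} (hx : ‖x‖ = 1)
    {σp : X} (hσp : σp ≠ 0) {δ : ℝ} (hδ : 0 < δ) :
    ∃ d : LushBlk 𝕜 X, LushBlkSpec x σp δ d := by
  classical
  have hnσ : ‖σp‖ ≠ 0 := norm_ne_zero_iff.mpr hσp
  set yp : X := (‖σp‖⁻¹ : ℝ) • σp with hypdef
  have hyp1 : ‖yp‖ = 1 := by
    rw [hypdef, norm_smul]
    simp [abs_of_nonneg (inv_nonneg.mpr (norm_nonneg σp)), inv_mul_cancel₀ hnσ]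
  obtain ⟨f, hf1, hfy, hdist⟩ := h x yp hx hyp1 δ hδ
  have hne : (convexHull ℝ (circleSmul 𝕜 (sphereSlice 𝕜 f δ))).Nonempty :=
    ⟨yp, subset_convexHull _ _ ⟨1, yp, by simp, hfy, (one_smul _ _).symm⟩⟩
  obtain ⟨v, hv, hvd⟩ := (Metric.infDist_lt_iff hne).mp hdist
  obtain ⟨ι, _, μ, z, hμ0, hμ1, hz, hzv⟩ := mem_convexHull_iff_exists_fintype.mp hv
  choose θf wf hθf hwf hzf using hz
  set n := Fintype.card ι with hn
  set e : Fin n → ι := fun j => (Fintype.equivFin ι).symm j with he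
  refine ⟨⟨f, n, fun j => if hj : j < n then μ (e ⟨j, hj⟩) else 0,
      fun j => if hj : j < n then θf (e ⟨j, hj⟩) else 1,
      fun j => if hj : j < n then wf (e ⟨j, hj⟩) else x⟩, ?_, ?_, ?_, ?_, ?_, ?_, ?_, ?_⟩
  · exact hf1
  · -- alignment
    have h2 : σp = (‖σp‖ : ℝ) • yp := by
      rw [hypdef, smul_smul, mul_inv_cancel₀ hnσ, one_smul]
    have h3 : RCLike.re (f σp) = ‖σp‖ * RCLike.re (f yp) := by
      conv_lhs => rw [h2]
      rw [f.map_smul_of_tower, RCLike.smul_re]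
    rw [h3]
    rw [mul_comm (1 - δ) ‖σp‖]
    exact mul_le_mul_of_nonneg_left (le_of_lt hfy.2) (norm_nonneg σp)
  · intro j hj
    rw [Finset.mem_range] at hj
    simpa [dif_pos hj] using hμ0 (e ⟨j, hj⟩)
  · -- sum of μ equals 1
    rw [← hμ1, ← Equiv.sum_comp (Fintype.equivFin ι).symm μ]
    rw [← Fin.sum_univ_eq_sum_range]
    apply Finset.sum_congr rfl
    intro j _
    simp [he]
  · intro j hj
    rw [Finset.mem_range] at hj
    simpa [dif_pos hj] using hθf (e ⟨j, hj⟩)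
  · intro j hj
    rw [Finset.mem_range] at hj
    simpa [dif_pos hj] using (hwf (e ⟨j, hj⟩)).1
  · intro j hj
    rw [Finset.mem_range] at hj
    simpa [dif_pos hj] using (hwf (e ⟨j, hj⟩)).2
  · -- distance
    have hveq : (LushBlk.v ⟨f, n, fun j => if hj : j < n then μ (e ⟨j, hj⟩) else 0,
        fun j => if hj : j < n then θf (e ⟨j, hj⟩) else 1,
        fun j => if hj : j < n then wf (e ⟨j, hj⟩) else x⟩) = v := by
      rw [LushBlk.v]
      rw [← hzv, ← Equiv.sum_comp (Fintype.equivFin ι).symm (fun i => μ i • z i)]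
      rw [← Fin.sum_univ_eq_sum_range (fun j => (if hj : j < n then μ (e ⟨j, hj⟩) else 0) •
        ((if hj : j < n then θf (e ⟨j, hj⟩) else 1) • (if hj : j < n then wf (e ⟨j, hj⟩) else x)))]
      apply Finset.sum_congr rfl
      intro j _
      simp [he, hzf]
    rw [hveq, ← dist_eq_norm]
    exact hvd

private theorem LushBlk.re_apply_blk (d : LushBlk 𝕜 X) (g : X →L[𝕜] 𝕜) :
    RCLike.re (g d.blk) = ∑ j ∈ Finset.range d.n, d.μ j * RCLike.re (g (d.w j)) := by
  rw [LushBlk.blk, map_sum, map_sum RCLike.re]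
  apply Finset.sum_congr rfl
  intro j _
  rw [g.map_smul_of_tower, RCLike.smul_re]

private theorem LushBlkSpec.norm_blk_le {x σp : X} {δ : ℝ} {d : LushBlk 𝕜 X}
    (hs : LushBlkSpec x σp δ d) : ‖d.blk‖ ≤ 1 := by
  rw [LushBlk.blk]
  calc ‖∑ j ∈ Finset.range d.n, d.μ j • d.w j‖ ≤ ∑ j ∈ Finset.range d.n, ‖d.μ j • d.w j‖ :=
        norm_sum_le _ _
    _ = ∑ j ∈ Finset.range d.n, d.μ j := by
        apply Finset.sum_congr rfl
        intro j hj
        rw [norm_smul, hs.hw j hj, mul_one, Real.norm_eq_abs, abs_of_nonneg (hs.hμ0 j hj)]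
    _ = 1 := hs.hμ1

private theorem LushBlkSpec.one_sub_le_re_blk {x σp : X} {δ : ℝ} {d : LushBlk 𝕜 X}
    (hs : LushBlkSpec x σp δ d) : 1 - δ ≤ RCLike.re (d.f d.blk) := by
  rw [d.re_apply_blk]
  calc (1 : ℝ) - δ = ∑ j ∈ Finset.range d.n, d.μ j * (1 - δ) := by
        rw [← Finset.sum_mul, hs.hμ1, one_mul]
    _ ≤ ∑ j ∈ Finset.range d.n, d.μ j * RCLike.re (d.f (d.w j)) := by
        apply Finset.sum_le_sum
        intro j hj
        exact mul_le_mul_of_nonneg_left (le_of_lt (hs.hslice j hj)) (hs.hμ0 j hj)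

private theorem LushBlkSpec.next_norm_ge {x σp : X} {δ : ℝ} {d : LushBlk 𝕜 X}
    (hs : LushBlkSpec x σp δ d) {c : ℝ} (hc : 0 ≤ c) :
    (1 - δ) * ‖σp‖ + c * (1 - δ) ≤ ‖σp + c • d.blk‖ := by
  have h1 : RCLike.re (d.f (σp + c • d.blk)) ≤ ‖σp + c • d.blk‖ := by
    have := re_apply_le_one (z := (‖σp + c • d.blk‖⁻¹ : ℝ) • (σp + c • d.blk)) (le_of_eq hs.hf)
    by_cases h0 : σp + c • d.blk = 0
    · rw [h0, map_zero]
      simp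
    · calc RCLike.re (d.f (σp + c • d.blk)) ≤ ‖d.f (σp + c • d.blk)‖ :=
            (le_abs_self _).trans (RCLike.abs_re_le_norm _)
        _ ≤ ‖d.f‖ * ‖σp + c • d.blk‖ := (d.f).le_opNorm _
        _ = ‖σp + c • d.blk‖ := by rw [hs.hf, one_mul]
  have h2 : RCLike.re (d.f (σp + c • d.blk)) =
      RCLike.re (d.f σp) + c * RCLike.re (d.f d.blk) := by
    rw [map_add, map_add RCLike.re, (d.f).map_smul_of_tower, RCLike.smul_re]
  have h3 := hs.one_sub_le_re_blk
  have h4 := hs.halign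
  nlinarith

private theorem LushBlkSpec.next_ne_zero {x σp : X} {δ : ℝ} {d : LushBlk 𝕜 X}
    (hs : LushBlkSpec x σp δ d) (hδ : δ ≤ 1/2) {c : ℝ} (hc : 1 ≤ c) :
    σp + c • d.blk ≠ 0 := by
  intro h0
  have h1 := hs.next_norm_ge (c := c) (by linarith)
  rw [h0, norm_zero] at h1
  nlinarith [norm_nonneg σp]

/-- Context: the data of a lush space together with the two points and `ε`. -/
private structure LushCtx (𝕜 X : Type*) [RCLike 𝕜] [NormedAddCommGroup X] [NormedSpace 𝕜 X]
    [NormedSpace ℝ X] where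
  lush : Lush 𝕜 X
  x : X
  y : X
  hx : ‖x‖ = 1
  hy : ‖y‖ = 1
  ε : ℝ
  hε : 0 < ε
  hε1 : ε ≤ 1

private noncomputable def LushCtx.δ (C : LushCtx 𝕜 X) (r : ℕ) : ℝ := C.ε / 32 ^ (r + 1)

private theorem LushCtx.δ_pos (C : LushCtx 𝕜 X) (r : ℕ) : 0 < C.δ r := by
  have := C.hε
  rw [LushCtx.δ]
  positivity

private theorem LushCtx.δ_le (C : LushCtx 𝕜 X) (r : ℕ) : C.δ r ≤ 1 / 32 := by
  rw [LushCtx.δ]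
  rw [div_le_div_iff₀ (by positivity) (by norm_num)]
  have h1 : (32 : ℝ) ^ 1 ≤ 32 ^ (r + 1) := by
    apply pow_le_pow_right₀ (by norm_num)
    omega
  nlinarith [C.hε1, C.hε]

private theorem LushCtx.y_ne_zero (C : LushCtx 𝕜 X) : C.y ≠ 0 := by
  intro h0
  have := C.hy
  rw [h0, norm_zero] at this
  norm_num at this

/-- The sequence of aggregated witness vectors. -/
private noncomputable def lushSeq (C : LushCtx 𝕜 X) : ℕ → {σ : X // σ ≠ 0} :=
  Nat.rec ⟨C.y, C.y_ne_zero⟩ (fun r p =>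
    ⟨p.1 + ((2 : ℝ) ^ (r + 1)) •
        (lush_step_exists C.lush C.hx p.2 (C.δ_pos r)).choose.blk,
      LushBlkSpec.next_ne_zero (lush_step_exists C.lush C.hx p.2 (C.δ_pos r)).choose_spec
        ((C.δ_le r).trans (by norm_num)) (one_le_pow₀ (by norm_num))⟩)

/-- The block data at stage `r`. -/
private noncomputable def lushD (C : LushCtx 𝕜 X) (r : ℕ) : LushBlk 𝕜 X :=
  (lush_step_exists C.lush C.hx (lushSeq C r).2 (C.δ_pos r)).choose

private theorem lushD_spec (C : LushCtx 𝕜 X) (r : ℕ) :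
    LushBlkSpec C.x (lushSeq C r).1 (C.δ r) (lushD C r) :=
  (lush_step_exists C.lush C.hx (lushSeq C r).2 (C.δ_pos r)).choose_spec

private theorem lushSeq_succ (C : LushCtx 𝕜 X) (r : ℕ) :
    (lushSeq C (r + 1)).1 = (lushSeq C r).1 + ((2 : ℝ) ^ (r + 1)) • (lushD C r).blk :=
  rfl

/-- The total weight at stage `r`. -/
private noncomputable def lushW (r : ℕ) : ℝ := 2 ^ (r + 1) - 1

private theorem lushW_succ (r : ℕ) : lushW (r + 1) = lushW r + 2 ^ (r + 1) := by
  rw [lushW, lushW]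
  ring

private theorem lushW_ge_one (r : ℕ) : 1 ≤ lushW r := by
  rw [lushW]
  have : (2 : ℝ) ^ 1 ≤ 2 ^ (r + 1) := by
    apply pow_le_pow_right₀ (by norm_num)
    omega
  nlinarith

private theorem lushSeq_norm_le (C : LushCtx 𝕜 X) (r : ℕ) :
    ‖(lushSeq C r).1‖ ≤ lushW r := by
  induction r with
  | zero =>
    have : (lushSeq C 0).1 = C.y := rfl
    rw [this, C.hy, lushW]
    norm_num
  | succ r ih =>
    rw [lushSeq_succ, lushW_succ]
    calc ‖(lushSeq C r).1 + ((2 : ℝ) ^ (r + 1)) • (lushD C r).blk‖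
        ≤ ‖(lushSeq C r).1‖ + ‖((2 : ℝ) ^ (r + 1)) • (lushD C r).blk‖ := norm_add_le _ _
      _ ≤ lushW r + 2 ^ (r + 1) := by
          have h1 : ‖((2 : ℝ) ^ (r + 1)) • (lushD C r).blk‖ ≤ 2 ^ (r + 1) := by
            rw [norm_smul, Real.norm_eq_abs, abs_of_nonneg (by positivity)]
            nlinarith [(lushD_spec C r).norm_blk_le, pow_pos (by norm_num : (0:ℝ) < 2) (r+1)]
          linarith

private theorem lushSeq_re_succ (C : LushCtx 𝕜 X) (r : ℕ) (g : X →L[𝕜] 𝕜) :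
    RCLike.re (g (lushSeq C (r + 1)).1) = RCLike.re (g (lushSeq C r).1)
      + 2 ^ (r + 1) * ∑ j ∈ Finset.range (lushD C r).n,
          (lushD C r).μ j * RCLike.re (g ((lushD C r).w j)) := by
  rw [lushSeq_succ, map_add, map_add RCLike.re, g.map_smul_of_tower, RCLike.smul_re,
    (lushD C r).re_apply_blk]

private theorem lush_blk_sum_re_le {x σp : X} {δ : ℝ} {d : LushBlk 𝕜 X}
    (hs : LushBlkSpec x σp δ d) (g : X →L[𝕜] 𝕜) (hg : ‖g‖ ≤ 1) :
    ∑ j ∈ Finset.range d.n, d.μ j * RCLike.re (g (d.w j)) ≤ 1 := by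
  calc ∑ j ∈ Finset.range d.n, d.μ j * RCLike.re (g (d.w j))
      ≤ ∑ j ∈ Finset.range d.n, d.μ j := by
        apply Finset.sum_le_sum
        intro j hj
        have h1 : RCLike.re (g (d.w j)) ≤ 1 := re_apply_le_one hg (le_of_eq (hs.hw j hj))
        nlinarith [hs.hμ0 j hj]
    _ = 1 := hs.hμ1

private theorem lushSeq_slack_mono (C : LushCtx 𝕜 X) (r : ℕ) (g : X →L[𝕜] 𝕜) (hg : ‖g‖ ≤ 1) :
    lushW r - RCLike.re (g (lushSeq C r).1)
      ≤ lushW (r + 1) - RCLike.re (g (lushSeq C (r + 1)).1) := by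
  rw [lushSeq_re_succ, lushW_succ]
  have h1 := lush_blk_sum_re_le (lushD_spec C r) g hg
  nlinarith [pow_pos (by norm_num : (0:ℝ) < 2) (r+1)]

private theorem lushSeq_slack_y (C : LushCtx 𝕜 X) (g : X →L[𝕜] 𝕜) (hg : ‖g‖ ≤ 1) (r : ℕ) :
    1 - RCLike.re (g C.y) ≤ lushW r - RCLike.re (g (lushSeq C r).1) := by
  induction r with
  | zero =>
    have h0 : (lushSeq C 0).1 = C.y := rfl
    rw [h0, lushW]
    norm_num
  | succ r ih => exact ih.trans (lushSeq_slack_mono C r g hg)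

private theorem lushSeq_slack_nonneg (C : LushCtx 𝕜 X) (g : X →L[𝕜] 𝕜) (hg : ‖g‖ ≤ 1)
    (r : ℕ) : 0 ≤ lushW r - RCLike.re (g (lushSeq C r).1) := by
  have h1 := lushSeq_slack_y C g hg r
  have h2 : RCLike.re (g C.y) ≤ 1 := re_apply_le_one hg (le_of_eq C.hy)
  linarith

private theorem lushSeq_slack_block (C : LushCtx 𝕜 X) {r₀ : ℕ} (s : Finset ℕ)
    (hs : s ⊆ Finset.range (lushD C r₀).n) (g : X →L[𝕜] 𝕜) (hg : ‖g‖ ≤ 1) :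
    ∀ r', r₀ < r' →
      2 ^ (r₀ + 1) * ∑ j ∈ s, (lushD C r₀).μ j * (1 - RCLike.re (g ((lushD C r₀).w j)))
        ≤ lushW r' - RCLike.re (g (lushSeq C r').1) := by
  intro r' hr'
  induction r' with
  | zero => omega
  | succ r' ih =>
    rcases Nat.lt_or_ge r₀ r' with hlt | hge
    · exact (ih hlt).trans (lushSeq_slack_mono C r' g hg)
    · have heq : r' = r₀ := by omega
      subst heq
      rw [lushSeq_re_succ, lushW_succ]
      have h1 : ∑ j ∈ s, (lushD C r').μ j * (1 - RCLike.re (g ((lushD C r').w j)))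
          ≤ ∑ j ∈ Finset.range (lushD C r').n,
              (lushD C r').μ j * (1 - RCLike.re (g ((lushD C r').w j))) := by
        apply Finset.sum_le_sum_of_subset_of_nonneg hs
        intro j hj _
        have h2 : RCLike.re (g ((lushD C r').w j)) ≤ 1 :=
          re_apply_le_one hg (le_of_eq ((lushD_spec C r').hw j hj))
        nlinarith [(lushD_spec C r').hμ0 j hj]
      have h3 : ∑ j ∈ Finset.range (lushD C r').n,
          (lushD C r').μ j * (1 - RCLike.re (g ((lushD C r').w j)))
          = 1 - ∑ j ∈ Finset.range (lushD C r').n,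
              (lushD C r').μ j * RCLike.re (g ((lushD C r').w j)) := by
        calc ∑ j ∈ Finset.range (lushD C r').n,
            (lushD C r').μ j * (1 - RCLike.re (g ((lushD C r').w j)))
            = ∑ j ∈ Finset.range (lushD C r').n,
              ((lushD C r').μ j - (lushD C r').μ j * RCLike.re (g ((lushD C r').w j))) := by
              apply Finset.sum_congr rfl
              intro j _
              ring
          _ = (∑ j ∈ Finset.range (lushD C r').n, (lushD C r').μ j)
              - ∑ j ∈ Finset.range (lushD C r').n,
                (lushD C r').μ j * RCLike.re (g ((lushD C r').w j)) := Finset.sum_sub_distrib _ _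
          _ = 1 - ∑ j ∈ Finset.range (lushD C r').n,
                (lushD C r').μ j * RCLike.re (g ((lushD C r').w j)) := by
              rw [(lushD_spec C r').hμ1]
      have h4 := lushSeq_slack_nonneg C g hg r'
      have h5 : (0:ℝ) < 2 ^ (r' + 1) := by positivity
      nlinarith

private theorem lushSeq_deficit (C : LushCtx 𝕜 X) (r : ℕ) :
    lushW r - ‖(lushSeq C r).1‖ ≤ 2 * C.ε / 15 * (1 - (1/16) ^ r) := by
  induction r with
  | zero =>
    have h0 : (lushSeq C 0).1 = C.y := rfl
    rw [h0, C.hy, lushW]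
    norm_num
  | succ r ih =>
    have hstep := (lushD_spec C r).next_norm_ge (c := (2:ℝ) ^ (r + 1)) (by positivity)
    rw [← lushSeq_succ] at hstep
    have hWle := lushSeq_norm_le C r
    have hδ : C.δ r = C.ε / 32 ^ (r + 1) := rfl
    -- arithmetic
    have hpow : (32 : ℝ) ^ (r + 1) = 2 ^ (r + 1) * 16 ^ (r + 1) := by
      rw [← mul_pow]
      norm_num
    have h2pos : (0:ℝ) < 2 ^ (r + 1) := by positivity
    have h16pos : (0:ℝ) < 16 ^ (r + 1) := by positivity
    have hδval : C.δ r * (2 ^ (r + 1)) = C.ε / 16 ^ (r + 1) := by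
      rw [hδ, hpow]
      field_simp
    have hkey : C.δ r * (lushW r + 2 ^ (r + 1)) ≤ 2 * C.ε / 15 * ((1/16)^r - (1/16)^(r+1)) := by
      have hW : lushW r + 2 ^ (r + 1) ≤ 2 ^ (r + 2) := by
        rw [lushW]
        have : (2:ℝ) ^ (r + 2) = 2 ^ (r+1) + 2 ^ (r+1) := by ring
        linarith
      have hδpos := C.δ_pos r
      have h1 : C.δ r * (lushW r + 2 ^ (r + 1)) ≤ C.δ r * 2 ^ (r + 2) :=
        mul_le_mul_of_nonneg_left hW (le_of_lt hδpos)
      have h2 : C.δ r * 2 ^ (r + 2) = 2 * (C.δ r * 2 ^ (r + 1)) := by ring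
      have h3 : ((1:ℝ)/16)^r - (1/16)^(r+1) = (15/16) * (1/16)^r := by
        rw [pow_succ]
        ring
      have h4 : ((1:ℝ)/16)^r = 16 / 16 ^ (r+1) := by
        rw [div_pow, one_pow, pow_succ]
        field_simp
      refine h1.trans (le_of_eq ?_)
      rw [h2, hδval, h3, h4]
      field_simp
    have hdefstep : lushW (r+1) - ‖(lushSeq C (r+1)).1‖
        ≤ (lushW r - ‖(lushSeq C r).1‖) + C.δ r * (lushW r + 2 ^ (r + 1)) := by
      rw [lushW_succ]
      nlinarith [norm_nonneg (lushSeq C r).1,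
        mul_le_mul_of_nonneg_left hWle (le_of_lt (C.δ_pos r)), h2pos,
        mul_pos (C.δ_pos r) h2pos]
    calc lushW (r+1) - ‖(lushSeq C (r+1)).1‖
        ≤ (lushW r - ‖(lushSeq C r).1‖) + C.δ r * (lushW r + 2 ^ (r + 1)) := hdefstep
      _ ≤ 2 * C.ε / 15 * (1 - (1/16) ^ r) + 2 * C.ε / 15 * ((1/16)^r - (1/16)^(r+1)) := by
          linarith
      _ = 2 * C.ε / 15 * (1 - (1/16) ^ (r+1)) := by ring

private theorem lushSeq_Ebound (C : LushCtx 𝕜 X) (r : ℕ) :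
    lushW r - RCLike.re ((lushD C r).f (lushSeq C r).1) ≤ C.ε / 3 := by
  have h1 := lushSeq_deficit C r
  have h2 := (lushD_spec C r).halign
  have h3 := lushSeq_norm_le C r
  have hδpos := C.δ_pos r
  have hδ : C.δ r = C.ε / 32 ^ (r + 1) := rfl
  -- ‖σ‖ - re ≤ δ ‖σ‖ ≤ δ W ≤ ε/16
  have h4 : C.δ r * lushW r ≤ C.ε / 16 := by
    rw [hδ, lushW]
    have hpow : (2:ℝ) ^ (r+1) * 16 ≤ 32 ^ (r + 1) := by
      have : (32 : ℝ) ^ (r + 1) = 2 ^ (r + 1) * 16 ^ (r + 1) := by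
        rw [← mul_pow]; norm_num
      rw [this]
      have h16 : (16:ℝ) ≤ 16 ^ (r+1) := by
        calc (16:ℝ) = 16 ^ 1 := by norm_num
          _ ≤ 16 ^ (r+1) := pow_le_pow_right₀ (by norm_num) (by omega)
      nlinarith [pow_pos (by norm_num : (0:ℝ) < 2) (r+1)]
    have h32pos : (0:ℝ) < 32 ^ (r+1) := by positivity
    rw [div_mul_eq_mul_div, div_le_div_iff₀ h32pos (by norm_num)]
    have h2p : (0:ℝ) < 2^(r+1) := by positivity
    nlinarith [C.hε]
  have h5 : ‖(lushSeq C r).1‖ - RCLike.re ((lushD C r).f (lushSeq C r).1)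
      ≤ C.δ r * lushW r := by
    nlinarith [norm_nonneg (lushSeq C r).1]
  have h6 : (1:ℝ)/16 ≤ 1/3 := by norm_num
  have hε := C.hε
  nlinarith [pow_nonneg (by norm_num : (0:ℝ) ≤ 1/16) r]


private theorem delta_le_aux (ε : ℝ) (r : ℕ) (hε1 : ε ≤ 1) :
    ε / 32 ^ (r + 1) ≤ 2 / 3 * (1 / 2) ^ (r + 1) := by
  have hpow : (32 : ℝ) ^ (r + 1) = 2 ^ (r + 1) * 16 ^ (r + 1) := by
    rw [← mul_pow]; norm_num
  have h16 : (16:ℝ) ≤ 16 ^ (r + 1) := by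
    calc (16:ℝ) = 16 ^ 1 := by norm_num
      _ ≤ 16 ^ (r + 1) := pow_le_pow_right₀ (by norm_num) (by omega)
  have h2p : (0:ℝ) < 2 ^ (r + 1) := by positivity
  have h32p : (0:ℝ) < 32 ^ (r + 1) := by positivity
  have hhalf : ((1:ℝ)/2) ^ (r + 1) = 1 / 2 ^ (r + 1) := by rw [div_pow, one_pow]
  rw [hhalf, mul_one_div, div_le_div_iff₀ h32p h2p, hpow]
  have k1 : ε * 2 ^ (r+1) ≤ 2 ^ (r+1) := by nlinarith
  have k2 : (2:ℝ) ^ (r+1) * 16 ≤ 2 ^ (r+1) * 16 ^ (r+1) :=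
    mul_le_mul_of_nonneg_left h16 (le_of_lt h2p)
  nlinarith

set_option maxHeartbeats 2000000 in
private theorem lush_main (h : Lush 𝕜 X) (x y : X) (hx : ‖x‖ = 1)
    (hy : ‖y‖ = 1) (ε : ℝ) (hε : 0 < ε) (hε1 : ε ≤ 1) :
    ∃ f : X →L[𝕜] 𝕜, ‖f‖ = 1 ∧ y ∈ sphereSlice 𝕜 f ε ∧
      x ∈ closure (convexHull ℝ (circleSmul 𝕜 (sphereSlice 𝕜 f ε))) := by
  classical
  obtain ⟨C, hCx, hCy, hCε⟩ : ∃ C : LushCtx 𝕜 X, C.x = x ∧ C.y = y ∧ C.ε = ε :=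
    ⟨⟨h, x, y, hx, hy, ε, hε, hε1⟩, rfl, rfl, rfl⟩
  -- the sequence of functionals, in the weak-star dual
  let φ : ℕ → WeakDual 𝕜 X := fun r => StrongDual.toWeakDual ((lushD C r).f)
  have hφval : ∀ r (z : X), (φ r) z = ((lushD C r).f) z := fun r z => rfl
  have hφnorm : ∀ r, ‖WeakDual.toStrongDual (φ r)‖ = 1 := fun r => (lushD_spec C r).hf
  have hφK : ∀ r, φ r ∈
      (WeakDual.toStrongDual ⁻¹' Metric.closedBall (0 : StrongDual 𝕜 X) 1) := by
    intro r
    simp only [Set.mem_preimage, Metric.mem_closedBall, dist_zero_right]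
    rw [hφnorm r]
  obtain ⟨F, hFK, hFcl⟩ :=
    (WeakDual.isCompact_closedBall (0 : StrongDual 𝕜 X) 1).exists_clusterPt
      (f := Filter.map φ Filter.atTop)
      (Filter.le_principal_iff.mpr (Filter.mem_map.mpr
        (Filter.Eventually.of_forall hφK)))
  have hfreq : ∀ U : Set (WeakDual 𝕜 X), IsOpen U → F ∈ U → ∀ N : ℕ,
      ∃ r, N ≤ r ∧ φ r ∈ U := by
    intro U hU hFU N
    have h1 : U ∈ nhds F := hU.mem_nhds hFU
    have h2 : {g : WeakDual 𝕜 X | ∃ r, N ≤ r ∧ φ r = g} ∈ Filter.map φ Filter.atTop := by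
      rw [Filter.mem_map]
      filter_upwards [Filter.mem_atTop N] with r hr
      exact ⟨r, hr, rfl⟩
    obtain ⟨g, hg1, r, hr, rfl⟩ := clusterPt_iff_nonempty.mp hFcl h1 h2
    exact ⟨r, hr, hg1⟩
  set Fd : X →L[𝕜] 𝕜 := WeakDual.toStrongDual F with hFddef
  have hFdval : ∀ z : X, Fd z = F z := fun z => rfl
  have hFdnorm : ‖Fd‖ ≤ 1 := by
    have := hFK
    simp only [Set.mem_preimage, Metric.mem_closedBall, dist_zero_right] at this
    exact this
  -- y-alignment of each functional
  have hfy : ∀ r, 1 - ε / 3 ≤ RCLike.re ((lushD C r).f y) := by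
    intro r
    have h1 := lushSeq_slack_y C ((lushD C r).f) (le_of_eq (lushD_spec C r).hf) r
    have h2 := lushSeq_Ebound C r
    rw [hCy] at h1
    rw [hCε] at h2
    linarith
  have hFy : 1 - ε / 3 ≤ RCLike.re (Fd y) := by
    by_contra hcon
    push_neg at hcon
    have hUopen : IsOpen {g : WeakDual 𝕜 X | RCLike.re (g y) < 1 - ε / 3} :=
      isOpen_lt (RCLike.continuous_re.comp (WeakDual.eval_continuous y)) continuous_const
    obtain ⟨r, -, hr2⟩ := hfreq _ hUopen (by simpa [hFdval] using hcon) 0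
    rw [Set.mem_setOf_eq, hφval] at hr2
    exact absurd (hfy r) (not_le.mpr hr2)
  -- bad mass estimate at each stage
  have key : ∀ r₀ : ℕ, ∑ j ∈ (Finset.range (lushD C r₀).n).filter
      (fun j => RCLike.re (Fd ((lushD C r₀).w j)) < 1 - ε / 2), (lushD C r₀).μ j
      ≤ 2 / 3 * (1 / 2) ^ (r₀ + 1) := by
    intro r₀
    set Bad : Finset ℕ := (Finset.range (lushD C r₀).n).filter
      (fun j => RCLike.re (Fd ((lushD C r₀).w j)) < 1 - ε / 2) with hBad
    have hUopen : IsOpen {g : WeakDual 𝕜 X |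
        ∀ j ∈ Bad, RCLike.re (g ((lushD C r₀).w j)) < 1 - ε / 2} := by
      have heq : {g : WeakDual 𝕜 X | ∀ j ∈ Bad, RCLike.re (g ((lushD C r₀).w j)) < 1 - ε / 2}
          = ⋂ j ∈ Bad, {g : WeakDual 𝕜 X | RCLike.re (g ((lushD C r₀).w j)) < 1 - ε / 2} := by
        ext g
        simp
      rw [heq]
      exact isOpen_biInter_finset fun j _ =>
        isOpen_lt (RCLike.continuous_re.comp (WeakDual.eval_continuous _)) continuous_const
    have hFU : F ∈ {g : WeakDual 𝕜 X |
        ∀ j ∈ Bad, RCLike.re (g ((lushD C r₀).w j)) < 1 - ε / 2} := by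
      intro j hj
      have := (Finset.mem_filter.mp hj).2
      simpa [hFdval] using this
    obtain ⟨r', hr', hφr'⟩ := hfreq _ hUopen hFU (r₀ + 1)
    have hg1 : ‖(lushD C r').f‖ ≤ 1 := le_of_eq (lushD_spec C r').hf
    have hblock := lushSeq_slack_block C Bad (Finset.filter_subset _ _)
      ((lushD C r').f) hg1 r' (by omega)
    have hE := lushSeq_Ebound C r'
    rw [hCε] at hE
    have hterm : ε / 2 * ∑ j ∈ Bad, (lushD C r₀).μ j
        ≤ ∑ j ∈ Bad, (lushD C r₀).μ j * (1 - RCLike.re ((lushD C r').f ((lushD C r₀).w j))) := by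
      rw [Finset.mul_sum]
      apply Finset.sum_le_sum
      intro j hj
      have h1 : RCLike.re ((lushD C r').f ((lushD C r₀).w j)) < 1 - ε / 2 := hφr' j hj
      have h2 : 0 ≤ (lushD C r₀).μ j :=
        (lushD_spec C r₀).hμ0 j (Finset.mem_of_mem_filter j hj)
      nlinarith
    have h2pow : (0:ℝ) < 2 ^ (r₀ + 1) := by positivity
    have h3 : 2 ^ (r₀ + 1) * ∑ j ∈ Bad, (lushD C r₀).μ j
        * (1 - RCLike.re ((lushD C r').f ((lushD C r₀).w j))) ≤ ε / 3 := le_trans hblock hE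
    have h5 : ε / 2 * (∑ j ∈ Bad, (lushD C r₀).μ j) * 2 ^ (r₀ + 1) ≤ ε / 3 := by
      nlinarith [mul_le_mul_of_nonneg_right hterm (le_of_lt h2pow)]
    have hhalf : ((1:ℝ) / 2) ^ (r₀ + 1) = 1 / 2 ^ (r₀ + 1) := by
      rw [div_pow, one_pow]
    rw [hhalf, mul_one_div, le_div_iff₀ h2pow]
    by_contra hcon
    push_neg at hcon
    nlinarith [mul_pos hε (sub_pos.mpr hcon)]
  -- the final functional
  have hFypos : (0:ℝ) < 1 - ε / 3 := by linarith
  have hFdpos : 0 < ‖Fd‖ := by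
    have h1 : RCLike.re (Fd y) ≤ ‖Fd‖ := by
      calc RCLike.re (Fd y) ≤ ‖Fd y‖ := (le_abs_self _).trans (RCLike.abs_re_le_norm _)
        _ ≤ ‖Fd‖ * ‖y‖ := Fd.le_opNorm y
        _ = ‖Fd‖ := by rw [hy, mul_one]
    linarith
  set fh : X →L[𝕜] 𝕜 := ((‖Fd‖⁻¹ : ℝ) : 𝕜) • Fd with hfhdef
  have hfhnorm : ‖fh‖ = 1 := by
    have hle : ‖fh‖ ≤ 1 := by
      have h1 := ContinuousLinearMap.opNorm_smul_le ((‖Fd‖⁻¹ : ℝ) : 𝕜) Fd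
      rw [RCLike.norm_ofReal, abs_of_pos (inv_pos.mpr hFdpos),
        inv_mul_cancel₀ (ne_of_gt hFdpos)] at h1
      exact h1
    have hFdeq : ((‖Fd‖ : ℝ) : 𝕜) • fh = Fd := by
      rw [hfhdef, smul_smul, ← RCLike.ofReal_mul, mul_inv_cancel₀ (ne_of_gt hFdpos)]
      simp
    have hge : ‖Fd‖ ≤ ‖Fd‖ * ‖fh‖ := by
      conv_lhs => rw [← hFdeq]
      have h2 := ContinuousLinearMap.opNorm_smul_le ((‖Fd‖ : ℝ) : 𝕜) fh
      rwa [RCLike.norm_ofReal, abs_of_pos hFdpos] at h2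
    nlinarith
  have hfhval : ∀ z : X, RCLike.re (fh z) = ‖Fd‖⁻¹ * RCLike.re (Fd z) := by
    intro z
    rw [hfhdef, ContinuousLinearMap.smul_apply, smul_eq_mul, RCLike.re_ofReal_mul]
  have hinv1 : 1 ≤ ‖Fd‖⁻¹ := (one_le_inv₀ hFdpos).mpr hFdnorm
  have hmono : ∀ z : X, 0 ≤ RCLike.re (Fd z) → RCLike.re (Fd z) ≤ RCLike.re (fh z) := by
    intro z hz
    rw [hfhval]
    nlinarith
  refine ⟨fh, hfhnorm, ⟨hy, ?_⟩, ?_⟩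
  · have h1 := hmono y (by linarith)
    linarith
  · rw [Metric.mem_closure_iff]
    intro η hη
    obtain ⟨r₀, hr₀⟩ := exists_pow_lt_of_lt_one hη (by norm_num : (1:ℝ)/2 < 1)
    set d := lushD C r₀ with hd
    set Bad : Finset ℕ := (Finset.range d.n).filter
      (fun j => RCLike.re (Fd (d.w j)) < 1 - ε / 2) with hBadd
    set Good : Finset ℕ := (Finset.range d.n).filter
      (fun j => ¬(RCLike.re (Fd (d.w j)) < 1 - ε / 2)) with hGoodd
    have hspec := lushD_spec C r₀
    have hb0 : 0 ≤ ∑ j ∈ Bad, d.μ j :=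
      Finset.sum_nonneg fun j hj => hspec.hμ0 j (Finset.mem_of_mem_filter j hj)
    have hab : ∑ j ∈ Bad, d.μ j + ∑ j ∈ Good, d.μ j = 1 := by
      rw [hBadd, hGoodd, Finset.sum_filter_add_sum_filter_not, hspec.hμ1]
    have hbb : ∑ j ∈ Bad, d.μ j ≤ 2 / 3 * (1 / 2) ^ (r₀ + 1) := key r₀
    have hhalfpos : (0:ℝ) < (1/2) ^ (r₀ + 1) := by positivity
    have hhalfle : ((1:ℝ)/2) ^ (r₀ + 1) ≤ 1 := pow_le_one₀ (by norm_num) (by norm_num)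
    have hGoodpos : (0:ℝ) < ∑ j ∈ Good, d.μ j := by nlinarith
    have hGoodle : ∑ j ∈ Good, d.μ j ≤ 1 := by nlinarith
    -- the center of mass over the good indices
    refine ⟨Good.centerMass d.μ (fun j => d.θ j • d.w j), ?_, ?_⟩
    · apply Finset.centerMass_mem_convexHull
      · intro j hj
        exact hspec.hμ0 j (Finset.mem_of_mem_filter j hj)
      · exact hGoodpos
      · intro j hj
        have hjr : j ∈ Finset.range d.n := Finset.mem_of_mem_filter j hj
        have hjg : ¬(RCLike.re (Fd (d.w j)) < 1 - ε / 2) := (Finset.mem_filter.mp hj).2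
        push_neg at hjg
        refine ⟨d.θ j, d.w j, hspec.hθ j hjr, ⟨hspec.hw j hjr, ?_⟩, rfl⟩
        have h1 := hmono (d.w j) (by linarith)
        linarith
    · -- the distance estimate
      set a : ℝ := ∑ j ∈ Good, d.μ j with ha
      set u : X := ∑ j ∈ Good, d.μ j • (d.θ j • d.w j) with hu
      set bv : X := ∑ j ∈ Bad, d.μ j • (d.θ j • d.w j) with hbv
      have hnorm_term : ∀ (s : Finset ℕ), s ⊆ Finset.range d.n →
          ‖∑ j ∈ s, d.μ j • (d.θ j • d.w j)‖ ≤ ∑ j ∈ s, d.μ j := by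
        intro s hsub
        calc ‖∑ j ∈ s, d.μ j • (d.θ j • d.w j)‖ ≤ ∑ j ∈ s, ‖d.μ j • (d.θ j • d.w j)‖ :=
              norm_sum_le _ _
          _ = ∑ j ∈ s, d.μ j := by
              apply Finset.sum_congr rfl
              intro j hj
              have hjr := hsub hj
              rw [norm_smul, norm_smul, hspec.hθ j hjr, hspec.hw j hjr,
                Real.norm_eq_abs, abs_of_nonneg (hspec.hμ0 j hjr), mul_one, mul_one]
      have hvsplit : d.v = bv + u := by
        rw [LushBlk.v, hbv, hu, hBadd, hGoodd, Finset.sum_filter_add_sum_filter_not]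
      have hbnorm : ‖bv‖ ≤ ∑ j ∈ Bad, d.μ j :=
        hnorm_term Bad (Finset.filter_subset _ _)
      have hunorm : ‖u‖ ≤ a := hnorm_term Good (Finset.filter_subset _ _)
      have hxv : ‖x - d.v‖ < C.δ r₀ := by
        have := hspec.hxv
        rwa [hCx] at this
      have hcm : Good.centerMass d.μ (fun j => d.θ j • d.w j) = a⁻¹ • u := by
        rw [Finset.centerMass, ha, hu]
      have hudiff : ‖u - a⁻¹ • u‖ ≤ ∑ j ∈ Bad, d.μ j := by
        have h1 : u - a⁻¹ • u = (1 - a⁻¹) • u := by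
          rw [sub_smul, one_smul]
        rw [h1, norm_smul, Real.norm_eq_abs]
        have h2 : 1 ≤ a⁻¹ := (one_le_inv₀ hGoodpos).mpr hGoodle
        rw [abs_of_nonpos (by linarith)]
        have h3 : (a⁻¹ - 1) * ‖u‖ ≤ (a⁻¹ - 1) * a :=
          mul_le_mul_of_nonneg_left hunorm (by linarith)
        have h4 : (a⁻¹ - 1) * a = 1 - a := by
          field_simp
        nlinarith [norm_nonneg u]
      have hδb : C.δ r₀ ≤ 2 / 3 * (1 / 2) ^ (r₀ + 1) := by
        have hδ : C.δ r₀ = C.ε / 32 ^ (r₀ + 1) := rfl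
        rw [hδ, hCε]
        exact delta_le_aux ε r₀ hε1
      have htotal : ‖x - Good.centerMass d.μ (fun j => d.θ j • d.w j)‖ < (1/2) ^ r₀ := by
        rw [hcm]
        calc ‖x - a⁻¹ • u‖ = ‖(x - d.v) + bv + (u - a⁻¹ • u)‖ := by
              rw [hvsplit]; congr 1; abel
          _ ≤ ‖(x - d.v) + bv‖ + ‖u - a⁻¹ • u‖ := norm_add_le _ _
          _ ≤ ‖x - d.v‖ + ‖bv‖ + ‖u - a⁻¹ • u‖ := by
              have := norm_add_le (x - d.v) bv
              linarith
          _ < C.δ r₀ + ∑ j ∈ Bad, d.μ j + ∑ j ∈ Bad, d.μ j := by linarith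
          _ ≤ 2/3 * (1/2) ^ (r₀+1) + 2/3 * (1/2) ^ (r₀+1) + 2/3 * (1/2) ^ (r₀+1) := by
              linarith
          _ ≤ (1/2) ^ r₀ := by
              have : ((1:ℝ)/2) ^ (r₀+1) = (1/2) * (1/2) ^ r₀ := by
                rw [pow_succ]; ring
              rw [this]
              nlinarith [pow_pos (by norm_num : (0:ℝ) < 1/2) r₀]
      rw [dist_eq_norm]
      exact htotal.trans hr₀

end LushAux

/-- Reformulation of lushness: the point x lies in the closed convex hull of the
rotations of the slice. -/
theorem lush_reformulation {𝕜 X : Type*} [RCLike 𝕜] [NormedAddCommGroup X] [NormedSpace 𝕜 X]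
    [NormedSpace ℝ X] [IsScalarTower ℝ 𝕜 X] [CompleteSpace X]
    (h : Lush 𝕜 X) :
    ∀ x y : X, ‖x‖ = 1 → ‖y‖ = 1 → ∀ ε : ℝ, 0 < ε → ∃ f : X →L[𝕜] 𝕜, ‖f‖ = 1 ∧
      y ∈ sphereSlice 𝕜 f ε ∧
      x ∈ closure (convexHull ℝ (circleSmul 𝕜 (sphereSlice 𝕜 f ε))) := by
  intro x y hx hy ε hε
  obtain ⟨f, hf1, hfy, hfx⟩ := lush_main h x y hx hy (min ε 1) (lt_min hε one_pos)
    (min_le_right _ _)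
  have hmono : sphereSlice 𝕜 f (min ε 1) ⊆ sphereSlice 𝕜 f ε := by
    intro z hz
    exact ⟨hz.1, lt_of_le_of_lt (by
      have := min_le_left ε 1
      linarith) hz.2⟩
  have hmono2 : circleSmul 𝕜 (sphereSlice 𝕜 f (min ε 1)) ⊆ circleSmul 𝕜 (sphereSlice 𝕜 f ε) := by
    rintro w ⟨θ, z, h1, h2, h3⟩
    exact ⟨θ, z, h1, hmono h2, h3⟩
  exact ⟨f, hf1, hmono hfy, closure_mono (convexHull_mono hmono2) hfx⟩
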